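/- Let q be an odd prime power, F a finite field with q² elements, and let (x, k, h, s, t) be an admissible tuple with additionally s + t ≠ 0. Then the point F₀ = (0, 2·s·t/(s + t)) is collinear with the two associated configuration points M = (k·x·W, k·W + U₀) and N = (k·x·V, k·V + Z); moreover, for all a, b ∈ F the point F₀ lies in the Buekenhout–Metz unital U_{a,b}. (Thus the intersection of the line MN with the line XY of a BM-special Triple O'Nan is always a point of the unital.) -/

import Mathlib

/-- A point `(x, y) ∈ F × F` lies on the (affine) Buekenhout–Metz unital `U_{a,b}`. -/
def memBM (q : ℕ) {F : Type*} [Field F] (a b : F) (P : F × F) : Prop :=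
  a * P.1 ^ 2 - a ^ q * P.1 ^ (2 * q) + (b - b ^ q) * P.1 ^ (q + 1) = P.2 - P.2 ^ q

/-- The tuple `(x, k, h, s, t)` is admissible. -/
def Admissible (q : ℕ) {F : Type*} [Field F] (x k h s t : F) : Prop :=
  x ≠ 0 ∧ k ≠ 0 ∧ h ≠ 0 ∧ h ≠ 1 ∧ s ^ q = s ∧ t ^ q = t ∧ s ≠ 0 ∧ t ≠ 0 ∧
    s ≠ t ∧ s - t * h ≠ 0 ∧ t - s * h ≠ 0

def Wc {F : Type*} [Field F] (h s t : F) : F := h * (s - t) / (s - t * h)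
def Uc {F : Type*} [Field F] (h s t : F) : F := s * t * (1 - h) / (s - t * h)
def Vc {F : Type*} [Field F] (h s t : F) : F := h * (t - s) / (t - s * h)
def Zc {F : Type*} [Field F] (h s t : F) : F := s * t * (1 - h) / (t - s * h)

/-- Configuration point `P = (x·k·h, k·h)`. -/
def ptP {F : Type*} [Field F] (x k h : F) : F × F := (x * k * h, k * h)
/-- Configuration point `Q = (x·k, k)`. -/
def ptQ {F : Type*} [Field F] (x k : F) : F × F := (x * k, k)
/-- Configuration point `M = (k·x·W, k·W + U₀)`. -/
def ptM {F : Type*} [Field F] (x k h s t : F) : F × F :=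
  (k * x * Wc h s t, k * Wc h s t + Uc h s t)
/-- Configuration point `N = (k·x·V, k·V + Z)`. -/
def ptN {F : Type*} [Field F] (x k h s t : F) : F × F :=
  (k * x * Vc h s t, k * Vc h s t + Zc h s t)

/-- Three points of `F × F` are collinear. -/
def Collin {F : Type*} [Field F] (A B C : F × F) : Prop :=
  (B.1 - A.1) * (C.2 - A.2) = (C.1 - A.1) * (B.2 - A.2)

theorem stmt_18 (q : ℕ) (hq_odd : Odd q) (hq_pp : IsPrimePow q)
    (F : Type*) [Field F] [Fintype F] (hF : Fintype.card F = q ^ 2)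
    (x k h s t : F) (hadm : Admissible q x k h s t) (hsum : s + t ≠ 0) :
    Collin ((0 : F), 2 * s * t / (s + t)) (ptM x k h s t) (ptN x k h s t) ∧
      ∀ a b : F, memBM q a b ((0 : F), 2 * s * t / (s + t)) := by

  obtain ⟨hx, hk, hh, hh1, hs, ht, hs0, ht0, hst, hsth, htsh⟩ := hadm
  have hq0 : q ≠ 0 := by
    rcases hq_pp with ⟨p, n, hp, hn, rfl⟩
    exact pow_ne_zero _ hp.ne_zero
  constructor
  · unfold Collin ptM ptN Wc Uc Vc Zc
    simp only
    have hsth' : s - h * t ≠ 0 := by rwa [mul_comm] at hsth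
    have htsh' : t - h * s ≠ 0 := by rwa [mul_comm] at htsh
    field_simp
    ring
  · intro a b
    -- Frobenius is additive
    have hfrob : ∀ u v : F, (u + v) ^ q = u ^ q + v ^ q := by
      obtain ⟨p, n, hp, hn, rfl⟩ := hq_pp
      have hpF : CharP F (ringChar F) := ringChar.charP F
      have hrc : (ringChar F).Prime := CharP.char_is_prime F (ringChar F)
      haveI : Fact (ringChar F).Prime := ⟨hrc⟩
      obtain ⟨m, hm⟩ := FiniteField.card F (ringChar F)
      have hcard : ringChar F ^ (m : ℕ) = p ^ (2 * n) := by
        rw [← hm.2, hF]; ring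
      have hpp : p = ringChar F := by
        have hdvd : p ∣ ringChar F ^ (m : ℕ) := by
          rw [hcard]
          exact dvd_pow_self p (by omega)
        have := hp.nat_prime.dvd_of_dvd_pow hdvd
        exact ((Nat.prime_dvd_prime_iff_eq hp.nat_prime hrc).mp this)
      haveI : CharP F p := hpp ▸ hpF
      haveI : Fact p.Prime := ⟨hpp ▸ hrc⟩
      intro u v
      exact add_pow_char_pow u v p n
    have h2 : (2 : F) ^ q = 2 := by
      have := hfrob 1 1
      simp only [one_pow] at this; rw [show (2 : F) = 1 + 1 by norm_num, this]
    unfold memBM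
    simp only [ne_eq, zero_pow hq0, zero_pow (by omega : 2 ≠ 0),
      zero_pow (by omega : 2 * q ≠ 0), zero_pow (by omega : q + 1 ≠ 0)]
    have : (2 * s * t / (s + t)) ^ q = 2 * s * t / (s + t) := by
      rw [div_pow, mul_pow, mul_pow, h2, hs, ht, hfrob, hs, ht]
    rw [this]
    ring
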